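/- Let W_1,...,W_n be finite-dimensional subspaces of a vector space with dim(W_i) ≤ α for all i, and suppose S_{i→j} ≤ W_i (1 ≤ i < j ≤ ℓ ≤ n) satisfy dim(S_{i→j}) ≤ β and h(W_j | Σ_{i<j} S_{i→j} + W_[j+1,n]) ≤ (d+1−n)β for all j ≤ ℓ, where n ≤ d+1. Let B = dim(W_[1,n]) and B_ℓ = (n−ℓ)α + C(ℓ,2)β + ℓ(d+1−n)β. Then for every integer v ≥ 0: C(v+2,2)·B ≤ (v+1)·B_ℓ + C(v+1,2)·nα − v·C(ℓ,2)·β, where C(m,2) = m(m−1)/2. (Theorem 3: the improved outer bound for linear exact-repair regenerating codes.) -/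

import Mathlib

open Module Finset

/-- Conditional dimension: `h(A|B) = dim(A+B) - dim(B)`. -/
noncomputable def condDim {F V : Type*} [Field F] [AddCommGroup V] [Module F V]
    (A B : Submodule F V) : ℤ :=
  (finrank F ↥(A ⊔ B) : ℤ) - (finrank F ↥B : ℤ)

set_option maxHeartbeats 1600000
namespace Stmt12Aux
variable {F V : Type*} [Field F] [AddCommGroup V] [Module F V]

noncomputable def rr (A : Submodule F V) : ℝ := (finrank F ↥A : ℝ)

lemma rr_nonneg (A : Submodule F V) : 0 ≤ rr A := by unfold rr; positivity

lemma rr_mono {A B : Submodule F V} [FiniteDimensional F ↥B] (h : A ≤ B) : rr A ≤ rr B := by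
  haveI := Submodule.finiteDimensional_of_le h
  exact_mod_cast Nat.cast_le.mpr (Submodule.finrank_mono h)

lemma dim4 (A B : Submodule F V) [FiniteDimensional F ↥A] [FiniteDimensional F ↥B] :
    rr (A ⊔ B) + rr (A ⊓ B) = rr A + rr B := by
  have := Submodule.finrank_sup_add_finrank_inf_eq A B
  unfold rr
  exact_mod_cast congrArg (Nat.cast : ℕ → ℝ) this

lemma rr_sup_le (A B : Submodule F V) [FiniteDimensional F ↥A] [FiniteDimensional F ↥B] :
    rr (A ⊔ B) ≤ rr A + rr B := by
  have h := dim4 A B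
  have := rr_nonneg (A ⊓ B)
  linarith

lemma fd_finsetSup' (s : Finset ℕ) (f : ℕ → Submodule F V)
    (h : ∀ i, FiniteDimensional F ↥(f i)) : FiniteDimensional F ↥(s.sup f) := by
  classical
  induction s using Finset.induction_on with
  | empty => rw [Finset.sup_empty]; exact (inferInstance : FiniteDimensional F ↥(⊥ : Submodule F V))
  | insert a s' hx ih =>
      rw [Finset.sup_insert]
      haveI := h a
      haveI := ih
      infer_instance

lemma rr_finsetSup_le (s : Finset ℕ) (f : ℕ → Submodule F V)
    (h : ∀ i, FiniteDimensional F ↥(f i)) :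
    rr (s.sup f) ≤ ∑ i ∈ s, rr (f i) := by
  classical
  induction s using Finset.induction_on with
  | empty => simp [Finset.sup_empty, rr]
  | insert a s' hx ih =>
      rw [Finset.sup_insert, Finset.sum_insert hx]
      haveI := h a
      haveI := fd_finsetSup' s' f h
      calc rr (f a ⊔ s'.sup f) ≤ rr (f a) + rr (s'.sup f) := rr_sup_le _ _
        _ ≤ rr (f a) + ∑ i ∈ s', rr (f i) := by linarith

/-- tail sup `W_[j+1, n]` -/
def XW (W : ℕ → Submodule F V) (n j : ℕ) : Submodule F V := (Icc (j+1) n).sup W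

/-- virtual node chain -/
def VC (W : ℕ → Submodule F V) (n ℓ : ℕ) : ℕ → Submodule F V
  | 0 => ⊥
  | u+1 => (Icc 1 ℓ).sup (fun i => W i ⊓ (XW W n i ⊔ VC W n ℓ u))

/-- partial sup of repair spaces sent to j from senders in `[k, j-1]` -/
def GG (S : ℕ → ℕ → Submodule F V) (j k : ℕ) : Submodule F V :=
  (Icc k (j-1)).sup (fun i => S i j)

section basic
variable (W : ℕ → Submodule F V) (S : ℕ → ℕ → Submodule F V) (n ℓ : ℕ)

lemma XW_mono {k j : ℕ} (h : k ≤ j) : XW W n j ≤ XW W n k :=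
  Finset.sup_mono (Finset.Icc_subset_Icc (by omega) le_rfl)

lemma W_le_XW {k i : ℕ} (h1 : k + 1 ≤ i) (h2 : i ≤ n) : W i ≤ XW W n k :=
  Finset.le_sup (Finset.mem_Icc.mpr ⟨h1, h2⟩)

lemma XW_succ {j : ℕ} (h1 : 1 ≤ j) (h2 : j ≤ n) : XW W n (j-1) = W j ⊔ XW W n j := by
  unfold XW
  have hj : j - 1 + 1 = j := by omega
  rw [hj]
  have : Finset.Icc j n = insert j (Finset.Icc (j+1) n) := by
    ext x; simp [Finset.mem_Icc, Finset.mem_insert]; omega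
  rw [this, Finset.sup_insert]

lemma VC_zero : VC W n ℓ 0 = ⊥ := rfl

lemma VC_succ (u : ℕ) : VC W n ℓ (u+1) = (Icc 1 ℓ).sup (fun i => W i ⊓ (XW W n i ⊔ VC W n ℓ u)) := rfl

lemma VC_mono : ∀ u, VC W n ℓ u ≤ VC W n ℓ (u+1) := by
  intro u
  induction u with
  | zero => simp [VC_zero]
  | succ u ih =>
      rw [VC_succ, VC_succ]
      exact Finset.sup_mono_fun (fun i _ => inf_le_inf le_rfl (sup_le_sup le_rfl ih))

lemma VC_le_BW (hln : ℓ ≤ n) : ∀ u, VC W n ℓ u ≤ XW W n 0 := by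
  intro u
  induction u with
  | zero => rw [VC_zero]; exact bot_le
  | succ u ih =>
      rw [VC_succ]
      apply Finset.sup_le
      intro i hi
      simp only [Finset.mem_Icc] at hi
      exact le_trans inf_le_left (W_le_XW W n (by omega) (by omega))

lemma W_inf_le_VC {i : ℕ} (h1 : 1 ≤ i) (h2 : i ≤ ℓ) (u : ℕ) :
    W i ⊓ (XW W n i ⊔ VC W n ℓ u) ≤ VC W n ℓ (u+1) := by
  rw [VC_succ]
  exact Finset.le_sup (f := fun i => W i ⊓ (XW W n i ⊔ VC W n ℓ u)) (Finset.mem_Icc.mpr ⟨h1, h2⟩)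

variable (hfdW : ∀ i, FiniteDimensional F ↥(W i)) (hfdS : ∀ i j, FiniteDimensional F ↥(S i j))

lemma fd_finsetSup (s : Finset ℕ) (f : ℕ → Submodule F V)
    (h : ∀ i, FiniteDimensional F ↥(f i)) : FiniteDimensional F ↥(s.sup f) := by
  classical
  induction s using Finset.induction_on with
  | empty => rw [Finset.sup_empty]; exact (inferInstance : FiniteDimensional F ↥(⊥ : Submodule F V))
  | insert a s' hx ih =>
      rw [Finset.sup_insert]
      haveI := h a
      haveI := ih
      infer_instance

include hfdW in
lemma fdXW (j : ℕ) : FiniteDimensional F ↥(XW W n j) := fd_finsetSup _ _ hfdW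

include hfdW in
lemma fdVC (u : ℕ) : FiniteDimensional F ↥(VC W n ℓ u) := by
  induction u with
  | zero => rw [VC_zero]; infer_instance
  | succ u ih =>
      rw [VC_succ]
      apply fd_finsetSup
      intro i
      haveI := hfdW i
      exact Submodule.finiteDimensional_of_le inf_le_left

include hfdS in
lemma fdGG (j k : ℕ) : FiniteDimensional F ↥(GG S j k) := fd_finsetSup _ _ (fun i => hfdS i j)

end basic

section perJ
variable (W : ℕ → Submodule F V) (S : ℕ → ℕ → Submodule F V) (n ℓ : ℕ)
variable (hfdW : ∀ i, FiniteDimensional F ↥(W i)) (hfdS : ∀ i j, FiniteDimensional F ↥(S i j))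
variable (hln : ℓ ≤ n)

lemma rr_bot : rr (⊥ : Submodule F V) = 0 := by simp [rr]

/-- exchange identity: `dim((A⊔B)∩T) = dim(A∩(B⊔T)) + dim(B∩T) - dim(A∩B)` -/
lemma swap4 (A B T : Submodule F V) [FiniteDimensional F ↥A] [FiniteDimensional F ↥B]
    [FiniteDimensional F ↥T] :
    rr ((A ⊔ B) ⊓ T) = rr (A ⊓ (B ⊔ T)) + rr (B ⊓ T) - rr (A ⊓ B) := by
  haveI : FiniteDimensional F ↥(B ⊔ T) := by infer_instance
  haveI : FiniteDimensional F ↥(A ⊔ B) := by infer_instance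
  have h1 := dim4 (A ⊔ B) T
  have h2 := dim4 A (B ⊔ T)
  have h3 := dim4 B T
  have h4 := dim4 A B
  have hassoc : A ⊔ (B ⊔ T) = (A ⊔ B) ⊔ T := (sup_assoc A B T).symm
  rw [hassoc] at h2
  linarith

include hln in
/-- the chase containment -/
lemma chase {j k u : ℕ} (hjl : j ≤ ℓ) (hk1 : 1 ≤ k) (hkj : k ≤ j - 1)
    (hSW : ∀ i j, 1 ≤ i → i < j → j ≤ ℓ → S i j ≤ W i) :
    S k j ⊓ (GG S j (k+1) ⊔ (W j ⊔ (XW W n j ⊔ VC W n ℓ u))) ≤ VC W n ℓ (u+1) := by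
  have hj1 : 1 ≤ j := by omega
  have hjn : j ≤ n := le_trans hjl hln
  have hstep : GG S j (k+1) ⊔ (W j ⊔ (XW W n j ⊔ VC W n ℓ u)) ≤ XW W n k ⊔ VC W n ℓ u := by
    apply sup_le
    · apply Finset.sup_le
      intro i hi
      simp only [Finset.mem_Icc] at hi
      exact le_trans (hSW i j (by omega) (by omega) hjl)
        (le_trans (W_le_XW W n (by omega) (by omega)) le_sup_left)
    · apply sup_le
      · exact le_trans (W_le_XW W n (by omega) hjn) le_sup_left
      · exact sup_le (le_trans (XW_mono W n (by omega)) le_sup_left) le_sup_right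
  calc S k j ⊓ (GG S j (k+1) ⊔ (W j ⊔ (XW W n j ⊔ VC W n ℓ u)))
      ≤ W k ⊓ (XW W n k ⊔ VC W n ℓ u) :=
        inf_le_inf (hSW k j hk1 (by omega) hjl) hstep
    _ ≤ VC W n ℓ (u+1) := W_inf_le_VC W n ℓ (by omega) (by omega) u

lemma GG_split {j k : ℕ} (hk1 : 1 ≤ k) (hkj : k ≤ j - 1) :
    GG S j k = S k j ⊔ GG S j (k+1) := by
  unfold GG
  have : Finset.Icc k (j-1) = insert k (Finset.Icc (k+1) (j-1)) := by
    ext x; simp [Finset.mem_Icc, Finset.mem_insert]; omega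
  rw [this, Finset.sup_insert]

include hfdW hfdS hln in
/-- downward induction: `dim(G_k ∩ (W_j ⊔ R_u)) ≤ dim(G_k ∩ R_{u+1})` -/
lemma claimK {j u : ℕ} (hj1 : 1 ≤ j) (hjl : j ≤ ℓ)
    (hSW : ∀ i j, 1 ≤ i → i < j → j ≤ ℓ → S i j ≤ W i) :
    ∀ c, c ≤ j - 1 →
      rr (GG S j (j-c) ⊓ (W j ⊔ (XW W n j ⊔ VC W n ℓ u)))
        ≤ rr (GG S j (j-c) ⊓ (XW W n j ⊔ VC W n ℓ (u+1))) := by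
  intro c
  induction c with
  | zero =>
      intro _
      have : GG S j (j - 0) = ⊥ := by
        unfold GG
        have : Finset.Icc (j-0) (j-1) = ∅ := by
          apply Finset.Icc_eq_empty; omega
        rw [this, Finset.sup_empty]
      rw [this, bot_inf_eq, bot_inf_eq]
  | succ c ih =>
      intro hc
      have hkdef : j - (c+1) + 1 = j - c := by omega
      set k := j - (c+1) with hk
      have hk1 : 1 ≤ k := by omega
      have hkj : k ≤ j - 1 := by omega
      have hGsplit : GG S j k = S k j ⊔ GG S j (k+1) := GG_split S hk1 hkj
      set A := S k j
      set B := GG S j (k+1)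
      set T := W j ⊔ (XW W n j ⊔ VC W n ℓ u) with hT
      set T' := XW W n j ⊔ VC W n ℓ (u+1) with hT'
      haveI : FiniteDimensional F ↥A := hfdS k j
      haveI : FiniteDimensional F ↥B := fdGG S hfdS j (k+1)
      haveI : FiniteDimensional F ↥(XW W n j) := fdXW W n hfdW j
      haveI : FiniteDimensional F ↥(VC W n ℓ u) := fdVC W n ℓ hfdW u
      haveI : FiniteDimensional F ↥(VC W n ℓ (u+1)) := fdVC W n ℓ hfdW (u+1)
      haveI : FiniteDimensional F ↥T := by rw [hT]; haveI := hfdW j; infer_instance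
      haveI : FiniteDimensional F ↥T' := by rw [hT']; infer_instance
      have e1 : rr ((A ⊔ B) ⊓ T) = rr (A ⊓ (B ⊔ T)) + rr (B ⊓ T) - rr (A ⊓ B) := swap4 A B T
      have e2 : rr ((A ⊔ B) ⊓ T') = rr (A ⊓ (B ⊔ T')) + rr (B ⊓ T') - rr (A ⊓ B) := swap4 A B T'
      have hmono1 : rr (A ⊓ (B ⊔ T)) ≤ rr (A ⊓ (B ⊔ T')) := by
        haveI : FiniteDimensional F ↥(A ⊓ (B ⊔ T')) := Submodule.finiteDimensional_of_le inf_le_left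
        apply rr_mono
        apply le_inf inf_le_left
        have hchase : A ⊓ (B ⊔ T) ≤ VC W n ℓ (u+1) := chase W S n ℓ hln hjl hk1 hkj hSW
        have h3 : VC W n ℓ (u+1) ≤ T' := le_sup_right
        exact le_trans hchase (le_trans h3 le_sup_right)
      have hmono2 : rr (B ⊓ T) ≤ rr (B ⊓ T') := by
        have := ih (by omega)
        have hkc : j - c = k + 1 := by omega
        rw [hkc] at this
        exact this
      have hgoal1 : GG S j (j - (c+1)) = A ⊔ B := hGsplit
      rw [hgoal1, e1, e2]
      linarith

include hfdW hfdS hln in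
lemma heart {j u : ℕ} (hj1 : 1 ≤ j) (hjl : j ≤ ℓ)
    (hSW : ∀ i j, 1 ≤ i → i < j → j ≤ ℓ → S i j ≤ W i) :
    rr (GG S j 1 ⊓ (W j ⊔ (XW W n j ⊔ VC W n ℓ u)))
      ≤ rr (GG S j 1 ⊓ (XW W n j ⊔ VC W n ℓ (u+1))) := by
  have h := claimK W S n ℓ hfdW hfdS hln (u := u) hj1 hjl hSW (j-1) le_rfl
  have hjj : j - (j-1) = 1 := by omega
  rw [hjj] at h
  exact h

include hfdW hfdS hln in
lemma perterm {j u : ℕ} (hj1 : 1 ≤ j) (hjl : j ≤ ℓ) :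
    rr (W j ⊔ (XW W n j ⊔ VC W n ℓ u)) - rr (XW W n j ⊔ VC W n ℓ u)
      ≤ (rr (W j ⊔ (GG S j 1 ⊔ XW W n j)) - rr (GG S j 1 ⊔ XW W n j))
        + rr (GG S j 1 ⊓ (W j ⊔ (XW W n j ⊔ VC W n ℓ u)))
        - rr (GG S j 1 ⊓ (XW W n j ⊔ VC W n ℓ u)) := by
  haveI hW := hfdW j
  haveI : FiniteDimensional F ↥(XW W n j) := fdXW W n hfdW j
  haveI : FiniteDimensional F ↥(VC W n ℓ u) := fdVC W n ℓ hfdW u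
  haveI : FiniteDimensional F ↥(GG S j 1) := fdGG S hfdS j 1
  set SS := GG S j 1 with hSS
  set R := XW W n j ⊔ VC W n ℓ u with hR
  set Au := SS ⊓ (W j ⊔ R) with hAu
  haveI : FiniteDimensional F ↥R := by rw [hR]; infer_instance
  haveI : FiniteDimensional F ↥Au := Submodule.finiteDimensional_of_le inf_le_left
  -- a
  have ha := dim4 (W j) R
  -- b
  have hb := dim4 (W j) (SS ⊔ XW W n j)
  -- c : monotonicity
  have hc : rr (W j ⊓ (SS ⊔ XW W n j)) ≤ rr (W j ⊓ (SS ⊔ R)) := by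
    haveI : FiniteDimensional F ↥(W j ⊓ (SS ⊔ R)) := Submodule.finiteDimensional_of_le inf_le_left
    apply rr_mono
    apply inf_le_inf le_rfl
    exact sup_le le_sup_left (le_trans (le_trans le_sup_left le_sup_right) le_rfl)
  -- d : EQ1
  have hd : W j ⊓ (SS ⊔ R) = W j ⊓ (Au ⊔ R) := by
    apply le_antisymm
    · intro x hx
      obtain ⟨hxW, hxSR⟩ := Submodule.mem_inf.mp hx
      rw [Submodule.mem_sup] at hxSR
      obtain ⟨s, hs, r, hr, hsum⟩ := hxSR
      refine Submodule.mem_inf.mpr ⟨hxW, Submodule.mem_sup.mpr ⟨s, ?_, r, hr, hsum⟩⟩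
      refine Submodule.mem_inf.mpr ⟨hs, ?_⟩
      have hsx : s = x - r := by rw [← hsum]; abel
      rw [hsx]
      exact Submodule.sub_mem _ (Submodule.mem_sup_left hxW) (Submodule.mem_sup_right hr)
    · exact inf_le_inf le_rfl (sup_le (le_trans inf_le_left le_sup_left) le_sup_right)
  -- e : EQ2 ingredients
  have he1 := dim4 (W j) (Au ⊔ R)
  have he2 := dim4 Au R
  have habs : W j ⊔ (Au ⊔ R) = W j ⊔ R := by
    apply le_antisymm
    · exact sup_le le_sup_left (sup_le inf_le_right le_sup_right)
    · exact sup_le_sup le_rfl le_sup_right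
  rw [habs] at he1
  -- f : EQ3
  have hf : Au ⊓ R = SS ⊓ R := by
    apply le_antisymm
    · exact inf_le_inf inf_le_left le_rfl
    · exact le_inf (le_inf inf_le_left (le_trans inf_le_right le_sup_right)) inf_le_right
  rw [hd] at hc
  rw [hf] at he2
  linarith

include hfdW hfdS hln in
lemma sumj_aux {j : ℕ} (hj1 : 1 ≤ j) (hjl : j ≤ ℓ)
    (hSW : ∀ i j, 1 ≤ i → i < j → j ≤ ℓ → S i j ≤ W i) :
    ∀ v : ℕ,
      ∑ u ∈ Finset.range (v+1),
          (rr (W j ⊔ (XW W n j ⊔ VC W n ℓ u)) - rr (XW W n j ⊔ VC W n ℓ u))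
        ≤ ((v:ℝ)+1) * (rr (W j ⊔ (GG S j 1 ⊔ XW W n j)) - rr (GG S j 1 ⊔ XW W n j))
          + rr (GG S j 1 ⊓ (W j ⊔ (XW W n j ⊔ VC W n ℓ v))) := by
  intro v
  induction v with
  | zero =>
      rw [Finset.sum_range_one]
      have h1 := perterm W S n ℓ hfdW hfdS hln (j := j) (u := 0) hj1 hjl
      have h2 := rr_nonneg (GG S j 1 ⊓ (XW W n j ⊔ VC W n ℓ 0))
      push_cast
      linarith
  | succ v ih =>
      rw [Finset.sum_range_succ]
      have h1 := perterm W S n ℓ hfdW hfdS hln (j := j) (u := v+1) hj1 hjl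
      have h2 := heart W S n ℓ hfdW hfdS hln (j := j) (u := v) hj1 hjl hSW
      push_cast
      push_cast at ih
      linarith

include hfdW hfdS hln in
lemma sumj {j : ℕ} (hj1 : 1 ≤ j) (hjl : j ≤ ℓ)
    (hSW : ∀ i j, 1 ≤ i → i < j → j ≤ ℓ → S i j ≤ W i) :
    ∀ v : ℕ,
      ∑ u ∈ Finset.range (v+1),
          (rr (W j ⊔ (XW W n j ⊔ VC W n ℓ u)) - rr (XW W n j ⊔ VC W n ℓ u))
        ≤ ((v:ℝ)+1) * (rr (W j ⊔ (GG S j 1 ⊔ XW W n j)) - rr (GG S j 1 ⊔ XW W n j))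
          + rr (GG S j 1) := by
  intro v
  haveI : FiniteDimensional F ↥(GG S j 1) := fdGG S hfdS j 1
  have h1 := sumj_aux W S n ℓ hfdW hfdS hln hj1 hjl hSW v
  have h2 : rr (GG S j 1 ⊓ (W j ⊔ (XW W n j ⊔ VC W n ℓ v))) ≤ rr (GG S j 1) :=
    rr_mono inf_le_left
  linarith

end perJ

section main
variable (W : ℕ → Submodule F V) (S : ℕ → ℕ → Submodule F V) (n ℓ : ℕ)
variable (hfdW : ∀ i, FiniteDimensional F ↥(W i)) (hfdS : ∀ i j, FiniteDimensional F ↥(S i j))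
variable (hln : ℓ ≤ n)

lemma XW_top : XW W n n = ⊥ := by
  unfold XW
  rw [Finset.Icc_eq_empty (by omega), Finset.sup_empty]

include hln in
lemma ident (u : ℕ) :
    rr (XW W n 0)
      = (∑ i ∈ Finset.range n,
          (rr (XW W n i ⊔ VC W n ℓ u) - rr (XW W n (i+1) ⊔ VC W n ℓ u)))
        + rr (VC W n ℓ u) := by
  have htel := Finset.sum_range_sub' (f := fun i => rr (XW W n i ⊔ VC W n ℓ u)) n
  have h0 : XW W n 0 ⊔ VC W n ℓ u = XW W n 0 := sup_eq_left.mpr (VC_le_BW W n ℓ hln u)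
  have hn : XW W n n ⊔ VC W n ℓ u = VC W n ℓ u := by rw [XW_top]; exact bot_sup_eq _
  simp only [h0, hn] at htel
  rw [htel]; ring

include hfdW in
lemma diff_eq {i : ℕ} (u : ℕ) (hi : i + 1 ≤ n) :
    rr (XW W n i ⊔ VC W n ℓ u) - rr (XW W n (i+1) ⊔ VC W n ℓ u)
      = rr (W (i+1)) - rr (W (i+1) ⊓ (XW W n (i+1) ⊔ VC W n ℓ u)) := by
  haveI := hfdW (i+1)
  haveI : FiniteDimensional F ↥(XW W n (i+1)) := fdXW W n hfdW (i+1)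
  haveI : FiniteDimensional F ↥(VC W n ℓ u) := fdVC W n ℓ hfdW u
  have hX : XW W n i = W (i+1) ⊔ XW W n (i+1) := by
    have h := XW_succ W n (j := i+1) (by omega) hi
    simpa using h
  have hd := dim4 (W (i+1)) (XW W n (i+1) ⊔ VC W n ℓ u)
  rw [hX, sup_assoc]
  linarith

include hfdW in
lemma diff_le {i : ℕ} (u : ℕ) (hi : i + 1 ≤ n) :
    rr (XW W n i ⊔ VC W n ℓ u) - rr (XW W n (i+1) ⊔ VC W n ℓ u) ≤ rr (W (i+1)) := by
  rw [diff_eq W n ℓ hfdW u hi]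
  have := rr_nonneg (W (i+1) ⊓ (XW W n (i+1) ⊔ VC W n ℓ u))
  linarith

include hfdW in
lemma VCrec (u : ℕ) :
    rr (VC W n ℓ (u+1))
      ≤ ∑ i ∈ Finset.range ℓ, rr (W (i+1) ⊓ (XW W n (i+1) ⊔ VC W n ℓ u)) := by
  rw [VC_succ]
  have h1 := rr_finsetSup_le (Finset.Icc 1 ℓ) (fun i => W i ⊓ (XW W n i ⊔ VC W n ℓ u))
    (fun i => by haveI := hfdW i; exact Submodule.finiteDimensional_of_le inf_le_left)
  have h2 : ∑ i ∈ Finset.Icc 1 ℓ, rr (W i ⊓ (XW W n i ⊔ VC W n ℓ u))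
      = ∑ i ∈ Finset.range ℓ, rr (W (i+1) ⊓ (XW W n (i+1) ⊔ VC W n ℓ u)) := by
    rw [← Finset.Ico_add_one_right_eq_Icc, Finset.sum_Ico_eq_sum_range]
    have hc : ℓ + 1 - 1 = ℓ := by omega
    rw [hc]
    exact Finset.sum_congr rfl (fun i _ => by rw [Nat.add_comm])
  rw [h2] at h1
  exact h1

include hfdW hln in
lemma sum_split (u : ℕ) :
    ∑ i ∈ Finset.range n,
        (rr (XW W n i ⊔ VC W n ℓ u) - rr (XW W n (i+1) ⊔ VC W n ℓ u))
      = (∑ i ∈ Finset.range ℓ,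
          (rr (XW W n i ⊔ VC W n ℓ u) - rr (XW W n (i+1) ⊔ VC W n ℓ u)))
        + ∑ i ∈ Finset.Ico ℓ n,
            (rr (XW W n i ⊔ VC W n ℓ u) - rr (XW W n (i+1) ⊔ VC W n ℓ u)) := by
  rw [Finset.range_eq_Ico, Finset.range_eq_Ico]
  exact (Finset.sum_Ico_consecutive (fun i => rr (XW W n i ⊔ VC W n ℓ u) - rr (XW W n (i+1) ⊔ VC W n ℓ u)) (Nat.zero_le ℓ) hln).symm

end main

lemma gaussR (m : ℕ) : ∑ i ∈ Finset.range m, (i:ℝ) = (m:ℝ)*((m:ℝ)-1)/2 := by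
  induction m with
  | zero => simp
  | succ m ih =>
      rw [Finset.sum_range_succ, ih]
      push_cast
      ring

section final
variable (W : ℕ → Submodule F V) (S : ℕ → ℕ → Submodule F V) (n ℓ : ℕ)
variable (hfdW : ∀ i, FiniteDimensional F ↥(W i)) (hfdS : ∀ i j, FiniteDimensional F ↥(S i j))
variable (hln : ℓ ≤ n) (α β : ℝ)

include hfdW hln in
lemma tail_bound (hWα : ∀ i, 1 ≤ i → i ≤ n → rr (W i) ≤ α) (u : ℕ) :
    ∑ i ∈ Finset.Ico ℓ n,
        (rr (XW W n i ⊔ VC W n ℓ u) - rr (XW W n (i+1) ⊔ VC W n ℓ u))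
      ≤ ((n:ℝ) - (ℓ:ℝ)) * α := by
  calc ∑ i ∈ Finset.Ico ℓ n,
        (rr (XW W n i ⊔ VC W n ℓ u) - rr (XW W n (i+1) ⊔ VC W n ℓ u))
      ≤ ∑ _i ∈ Finset.Ico ℓ n, α := by
        apply Finset.sum_le_sum
        intro i hi
        simp only [Finset.mem_Ico] at hi
        exact le_trans (diff_le W n ℓ hfdW u (by omega)) (hWα (i+1) (by omega) (by omega))
    _ = ((n - ℓ : ℕ) : ℝ) * α := by
        rw [Finset.sum_const, Nat.card_Ico]
        exact nsmul_eq_mul _ _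
    _ = ((n:ℝ) - (ℓ:ℝ)) * α := by rw [Nat.cast_sub hln]

include hfdW hfdS hln in
lemma VCgrow (hWα : ∀ i, 1 ≤ i → i ≤ n → rr (W i) ≤ α) (u : ℕ) :
    rr (VC W n ℓ (u+1)) ≤ (n:ℝ)*α - rr (XW W n 0) + rr (VC W n ℓ u) := by
  have h1 := VCrec W n ℓ hfdW u
  have h2 : ∀ i ∈ Finset.range ℓ, rr (W (i+1) ⊓ (XW W n (i+1) ⊔ VC W n ℓ u))
      = rr (W (i+1)) - (rr (XW W n i ⊔ VC W n ℓ u) - rr (XW W n (i+1) ⊔ VC W n ℓ u)) := by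
    intro i hi
    simp only [Finset.mem_range] at hi
    have := diff_eq W n ℓ hfdW (i := i) u (by omega)
    linarith
  rw [Finset.sum_congr rfl h2, Finset.sum_sub_distrib] at h1
  have h3 : ∑ i ∈ Finset.range ℓ, rr (W (i+1)) ≤ (ℓ:ℝ)*α := by
    calc ∑ i ∈ Finset.range ℓ, rr (W (i+1)) ≤ ∑ _i ∈ Finset.range ℓ, α :=
          Finset.sum_le_sum (fun i hi => by
            simp only [Finset.mem_range] at hi
            exact hWα (i+1) (by omega) (by omega))
      _ = (ℓ:ℝ)*α := by rw [Finset.sum_const, Finset.card_range]; exact nsmul_eq_mul _ _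
  have h4 := tail_bound W n ℓ hfdW hln α hWα u
  have h5 := ident W n ℓ hln u
  have h6 := sum_split W n ℓ hfdW hln u
  linarith

include hfdW hfdS hln in
lemma VCbound (hWα : ∀ i, 1 ≤ i → i ≤ n → rr (W i) ≤ α) :
    ∀ u, rr (VC W n ℓ u) ≤ (u:ℝ) * ((n:ℝ)*α - rr (XW W n 0)) := by
  intro u
  induction u with
  | zero => rw [VC_zero]; simp [rr]
  | succ u ih =>
      have hg := VCgrow W S n ℓ hfdW hfdS hln α hWα u
      have hexp : ((u+1 : ℕ):ℝ) * ((n:ℝ)*α - rr (XW W n 0))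
          = (u:ℝ) * ((n:ℝ)*α - rr (XW W n 0)) + ((n:ℝ)*α - rr (XW W n 0)) := by
        push_cast; ring
      rw [hexp]
      linarith

include hfdW hfdS hln in
lemma mainBound
    (hWα : ∀ i, 1 ≤ i → i ≤ n → rr (W i) ≤ α)
    (hSW : ∀ i j, 1 ≤ i → i < j → j ≤ ℓ → S i j ≤ W i)
    (hSβ : ∀ i j, 1 ≤ i → i < j → j ≤ ℓ → rr (S i j) ≤ β)
    (tβ : ℝ)
    (hcrep : ∀ j, 1 ≤ j → j ≤ ℓ →
      rr (W j ⊔ (GG S j 1 ⊔ XW W n j)) - rr (GG S j 1 ⊔ XW W n j) ≤ tβ)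
    (v : ℕ) :
    ((v:ℝ)+1) * rr (XW W n 0)
      ≤ ((v:ℝ)+1) * (((n:ℝ) - (ℓ:ℝ)) * α) + ((v:ℝ)+1) * ((ℓ:ℝ) * tβ)
        + (ℓ:ℝ)*((ℓ:ℝ)-1)/2 * β
        + ((v:ℝ)+1)*(v:ℝ)/2 * ((n:ℝ)*α - rr (XW W n 0)) := by
  -- identity summed over u
  have hident : ∀ u, rr (XW W n 0)
      = (∑ i ∈ Finset.range ℓ,
          (rr (XW W n i ⊔ VC W n ℓ u) - rr (XW W n (i+1) ⊔ VC W n ℓ u)))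
        + ((∑ i ∈ Finset.Ico ℓ n,
            (rr (XW W n i ⊔ VC W n ℓ u) - rr (XW W n (i+1) ⊔ VC W n ℓ u)))
          + rr (VC W n ℓ u)) := by
    intro u
    have h5 := ident W n ℓ hln u
    have h6 := sum_split W n ℓ hfdW hln u
    linarith
  have hsumid : ((v:ℝ)+1) * rr (XW W n 0)
      = (∑ u ∈ Finset.range (v+1), ∑ i ∈ Finset.range ℓ,
          (rr (XW W n i ⊔ VC W n ℓ u) - rr (XW W n (i+1) ⊔ VC W n ℓ u)))
        + ((∑ u ∈ Finset.range (v+1), ∑ i ∈ Finset.Ico ℓ n,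
            (rr (XW W n i ⊔ VC W n ℓ u) - rr (XW W n (i+1) ⊔ VC W n ℓ u)))
          + ∑ u ∈ Finset.range (v+1), rr (VC W n ℓ u)) := by
    rw [← Finset.sum_add_distrib, ← Finset.sum_add_distrib]
    rw [Finset.sum_congr rfl (fun u _ => (hident u).symm)]
    rw [Finset.sum_const, Finset.card_range]
    push_cast [nsmul_eq_mul]
    ring
  -- head bound
  have hhead : (∑ u ∈ Finset.range (v+1), ∑ i ∈ Finset.range ℓ,
        (rr (XW W n i ⊔ VC W n ℓ u) - rr (XW W n (i+1) ⊔ VC W n ℓ u)))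
      ≤ ((v:ℝ)+1) * ((ℓ:ℝ) * tβ) + (ℓ:ℝ)*((ℓ:ℝ)-1)/2 * β := by
    rw [Finset.sum_comm]
    have hper : ∀ i ∈ Finset.range ℓ,
        (∑ u ∈ Finset.range (v+1),
          (rr (XW W n i ⊔ VC W n ℓ u) - rr (XW W n (i+1) ⊔ VC W n ℓ u)))
        ≤ ((v:ℝ)+1) * tβ + (i:ℝ) * β := by
      intro i hi
      simp only [Finset.mem_range] at hi
      have hconv : ∀ u, rr (XW W n i ⊔ VC W n ℓ u) - rr (XW W n (i+1) ⊔ VC W n ℓ u)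
          = rr (W (i+1) ⊔ (XW W n (i+1) ⊔ VC W n ℓ u)) - rr (XW W n (i+1) ⊔ VC W n ℓ u) := by
        intro u
        have hX : XW W n i = W (i+1) ⊔ XW W n (i+1) := by
          have h := XW_succ W n (j := i+1) (by omega) (by omega)
          simpa using h
        rw [hX, sup_assoc]
      have hs := sumj W S n ℓ hfdW hfdS hln (j := i+1) (by omega) (by omega) hSW v
      have hconv2 : (∑ u ∈ Finset.range (v+1),
            (rr (XW W n i ⊔ VC W n ℓ u) - rr (XW W n (i+1) ⊔ VC W n ℓ u)))
          = ∑ u ∈ Finset.range (v+1),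
            (rr (W (i+1) ⊔ (XW W n (i+1) ⊔ VC W n ℓ u)) - rr (XW W n (i+1) ⊔ VC W n ℓ u)) :=
        Finset.sum_congr rfl (fun u _ => hconv u)
      rw [hconv2]
      have hc := hcrep (i+1) (by omega) (by omega)
      have hGG : rr (GG S (i+1) 1) ≤ (i:ℝ) * β := by
        have h1 := rr_finsetSup_le (Finset.Icc 1 ((i+1)-1)) (fun i' => S i' (i+1))
          (fun i' => hfdS i' (i+1))
        have h2 : ∑ i' ∈ Finset.Icc 1 ((i+1)-1), rr (S i' (i+1)) ≤ (i:ℝ) * β := by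
          calc ∑ i' ∈ Finset.Icc 1 ((i+1)-1), rr (S i' (i+1))
              ≤ ∑ _i' ∈ Finset.Icc 1 ((i+1)-1), β := by
                apply Finset.sum_le_sum
                intro i' hi'
                simp only [Finset.mem_Icc] at hi'
                exact hSβ i' (i+1) (by omega) (by omega) (by omega)
            _ = (i:ℝ) * β := by
                rw [Finset.sum_const, Nat.card_Icc]
                have : (i+1)-1+1-1 = i := by omega
                rw [this]
                exact nsmul_eq_mul _ _
        exact le_trans h1 h2
      have hv1 : (0:ℝ) ≤ (v:ℝ)+1 := by positivity
      have := mul_le_mul_of_nonneg_left hc hv1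
      linarith
    calc (∑ i ∈ Finset.range ℓ, ∑ u ∈ Finset.range (v+1),
          (rr (XW W n i ⊔ VC W n ℓ u) - rr (XW W n (i+1) ⊔ VC W n ℓ u)))
        ≤ ∑ i ∈ Finset.range ℓ, (((v:ℝ)+1) * tβ + (i:ℝ) * β) := Finset.sum_le_sum hper
      _ = ((v:ℝ)+1) * ((ℓ:ℝ) * tβ) + (ℓ:ℝ)*((ℓ:ℝ)-1)/2 * β := by
          rw [Finset.sum_add_distrib, Finset.sum_const, Finset.card_range,
            ← Finset.sum_mul, gaussR]
          push_cast [nsmul_eq_mul]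
          ring
  -- tail
  have htail : (∑ u ∈ Finset.range (v+1), ∑ i ∈ Finset.Ico ℓ n,
        (rr (XW W n i ⊔ VC W n ℓ u) - rr (XW W n (i+1) ⊔ VC W n ℓ u)))
      ≤ ((v:ℝ)+1) * (((n:ℝ) - (ℓ:ℝ)) * α) := by
    calc (∑ u ∈ Finset.range (v+1), ∑ i ∈ Finset.Ico ℓ n,
          (rr (XW W n i ⊔ VC W n ℓ u) - rr (XW W n (i+1) ⊔ VC W n ℓ u)))
        ≤ ∑ _u ∈ Finset.range (v+1), ((n:ℝ) - (ℓ:ℝ)) * α :=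
          Finset.sum_le_sum (fun u _ => tail_bound W n ℓ hfdW hln α hWα u)
      _ = ((v:ℝ)+1) * (((n:ℝ) - (ℓ:ℝ)) * α) := by
          rw [Finset.sum_const, Finset.card_range]
          push_cast [nsmul_eq_mul]
          ring
  -- virtual nodes
  have hvc : (∑ u ∈ Finset.range (v+1), rr (VC W n ℓ u))
      ≤ ((v:ℝ)+1)*(v:ℝ)/2 * ((n:ℝ)*α - rr (XW W n 0)) := by
    calc (∑ u ∈ Finset.range (v+1), rr (VC W n ℓ u))
        ≤ ∑ u ∈ Finset.range (v+1), (u:ℝ) * ((n:ℝ)*α - rr (XW W n 0)) :=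
          Finset.sum_le_sum (fun u _ => VCbound W S n ℓ hfdW hfdS hln α hWα u)
      _ = ((v:ℝ)+1)*(v:ℝ)/2 * ((n:ℝ)*α - rr (XW W n 0)) := by
          rw [← Finset.sum_mul, gaussR]
          push_cast
          ring
  linarith

end final

end Stmt12Aux

/-- Theorem 3: improved outer bound for linear exact-repair codes:
`C(v+2,2)·B ≤ (v+1)·B_ℓ + C(v+1,2)·nα − v·C(ℓ,2)·β`. -/
theorem stmt12 {F V : Type*} [Field F] [AddCommGroup V] [Module F V]
    (W : ℕ → Submodule F V) (S : ℕ → ℕ → Submodule F V)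
    (hfdW : ∀ i, FiniteDimensional F ↥(W i)) (hfdS : ∀ i j, FiniteDimensional F ↥(S i j))
    (n ℓ d : ℕ) (hln : ℓ ≤ n) (hnd : n ≤ d + 1)
    (α β : ℝ) (hα : 0 ≤ α) (hβ : 0 ≤ β)
    (hWα : ∀ i, 1 ≤ i → i ≤ n → (finrank F ↥(W i) : ℝ) ≤ α)
    (hSW : ∀ i j, 1 ≤ i → i < j → j ≤ ℓ → S i j ≤ W i)
    (hSβ : ∀ i j, 1 ≤ i → i < j → j ≤ ℓ → (finrank F ↥(S i j) : ℝ) ≤ β)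
    (hrep : ∀ j, 1 ≤ j → j ≤ ℓ →
      ((condDim (W j) (((Finset.Icc 1 (j-1)).sup (fun i => S i j))
          ⊔ (Finset.Icc (j+1) n).sup W) : ℤ) : ℝ)
        ≤ ((d : ℝ) + 1 - (n : ℝ)) * β) :
    ∀ v : ℕ,
      ((v : ℝ) + 2) * ((v : ℝ) + 1) / 2 * (finrank F ↥((Finset.Icc 1 n).sup W) : ℝ)
      ≤ ((v : ℝ) + 1) * (((n : ℝ) - (ℓ : ℝ)) * α + (ℓ : ℝ) * ((ℓ : ℝ) - 1) / 2 * β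
            + (ℓ : ℝ) * ((d : ℝ) + 1 - (n : ℝ)) * β)
        + ((v : ℝ) + 1) * (v : ℝ) / 2 * ((n : ℝ) * α)
        - (v : ℝ) * ((ℓ : ℝ) * ((ℓ : ℝ) - 1) / 2) * β := by
  intro v
  have hcrep : ∀ j, 1 ≤ j → j ≤ ℓ →
      Stmt12Aux.rr (W j ⊔ (Stmt12Aux.GG S j 1 ⊔ Stmt12Aux.XW W n j))
        - Stmt12Aux.rr (Stmt12Aux.GG S j 1 ⊔ Stmt12Aux.XW W n j)
        ≤ ((d:ℝ)+1-(n:ℝ))*β := by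
    intro j h1 h2
    have h := hrep j h1 h2
    have heq : ((condDim (W j) (((Finset.Icc 1 (j-1)).sup (fun i => S i j))
          ⊔ (Finset.Icc (j+1) n).sup W) : ℤ) : ℝ)
        = Stmt12Aux.rr (W j ⊔ (Stmt12Aux.GG S j 1 ⊔ Stmt12Aux.XW W n j))
          - Stmt12Aux.rr (Stmt12Aux.GG S j 1 ⊔ Stmt12Aux.XW W n j) := by
      simp only [condDim, Stmt12Aux.rr, Stmt12Aux.GG, Stmt12Aux.XW]
      push_cast
      rfl
    rw [heq] at h
    exact h
  have hWα' : ∀ i, 1 ≤ i → i ≤ n → Stmt12Aux.rr (W i) ≤ α := hWα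
  have hSβ' : ∀ i j, 1 ≤ i → i < j → j ≤ ℓ → Stmt12Aux.rr (S i j) ≤ β := hSβ
  have hmain := Stmt12Aux.mainBound W S n ℓ hfdW hfdS hln α β hWα' hSW hSβ'
    (((d:ℝ)+1-(n:ℝ))*β) hcrep v
  have hBW : Stmt12Aux.rr (Stmt12Aux.XW W n 0)
      = (finrank F ↥((Finset.Icc 1 n).sup W) : ℝ) := rfl
  rw [hBW] at hmain
  linarith [hmain]
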